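/- Let F be a field, V a finite-dimensional vector space over F of dimension n, A ∈ End(V), v ∈ V, and φ ∈ V^*. Then the following are equivalent: (1) φ(A^k v) = 0 for all integers k ≥ 0; (2) for every λ ∈ F, the characteristic polynomial of A + λ·(v⊗φ) equals the characteristic polynomial of A; (3) there exists a nonzero λ ∈ F such that the characteristic polynomial of A + λ·(v⊗φ) equals the characteristic polynomial of A. -/

import Mathlib

open Polynomial Matrix Finset

namespace Stmt2Aux

lemma mulVec_sum' {R : Type*} [CommRing R] {m k : Type*} [Fintype k] {ι : Type*}
    (s : Finset ι) (M : Matrix m k R) (f : ι → k → R) :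
    M *ᵥ (∑ j ∈ s, f j) = ∑ j ∈ s, M *ᵥ f j :=
  map_sum M.mulVecLin f s

lemma sum_mulVec' {R : Type*} [CommRing R] {m k : Type*} [Fintype k] {ι : Type*}
    (s : Finset ι) (f : ι → Matrix m k R) (x : k → R) :
    (∑ j ∈ s, f j) *ᵥ x = ∑ j ∈ s, f j *ᵥ x := by
  funext i
  simp only [Matrix.mulVec, dotProduct, Matrix.sum_apply, Finset.sum_mul, Finset.sum_apply]
  exact Finset.sum_comm

lemma det_one_add_row_mul_col {K : Type*} [CommRing K] {n ι : Type*} [Fintype n] [Unique ι]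
    (w u : n → K) (B : Matrix n n K) :
    (1 + Matrix.replicateRow ι w * B * Matrix.replicateCol ι u).det = 1 + w ⬝ᵥ (B *ᵥ u) := by
  rw [Matrix.det_unique]
  simp only [Matrix.add_apply, Matrix.one_apply_eq, Matrix.mul_apply, Matrix.replicateRow_apply,
    Matrix.replicateCol_apply, Matrix.mulVec, dotProduct, Finset.sum_mul, Finset.mul_sum]
  congr 1
  rw [Finset.sum_comm]
  exact Finset.sum_congr rfl fun _ _ => Finset.sum_congr rfl fun _ _ => by ring

lemma det_rank_one_update {F : Type*} [Field F] {n : ℕ}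
    {A : Matrix (Fin n) (Fin n) F[X]} (hA : A.det ≠ 0) (u w : Fin n → F[X]) :
    (A + Matrix.replicateCol (Fin 1) u * Matrix.replicateRow (Fin 1) w).det
      = A.det + w ⬝ᵥ (A.adjugate *ᵥ u) := by
  set K := RatFunc F
  have hf : Function.Injective (algebraMap F[X] K) := RatFunc.algebraMap_injective F
  apply hf
  set f := algebraMap F[X] K
  have hmap : ∀ (B : Matrix (Fin n) (Fin n) F[X]), f B.det = (B.map f).det :=
    fun B => RingHom.map_det f B
  have hdet : (A.map f).det ≠ 0 := by rw [← hmap]; exact fun h => hA (hf (by simpa using h))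
  have hAd : IsUnit (A.map f).det := isUnit_iff_ne_zero.mpr hdet
  have h1 : ((A + Matrix.replicateCol (Fin 1) u * Matrix.replicateRow (Fin 1) w).map f)
      = A.map f + Matrix.replicateCol (Fin 1) (f ∘ u) * Matrix.replicateRow (Fin 1) (f ∘ w) := by
    ext i j
    simp [Matrix.mul_apply, Matrix.map_apply, Matrix.add_apply]
  rw [hmap, h1]
  erw [Matrix.det_add_replicateCol_mul_replicateRow (ι := Fin 1) hAd]
  rw [det_one_add_row_mul_col]
  rw [Matrix.inv_def, Ring.inverse_eq_inv, Matrix.smul_mulVec, dotProduct_smul]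
  rw [map_add, hmap]
  have h3 : f (w ⬝ᵥ A.adjugate *ᵥ u) = (f ∘ w) ⬝ᵥ ((A.map f).adjugate *ᵥ (f ∘ u)) := by
    have : (A.map f).adjugate = (A.adjugate).map f := by
      rw [show A.map ⇑f = f.mapMatrix A from rfl, ← RingHom.map_adjugate]; rfl
    rw [this]
    simp [dotProduct, Matrix.mulVec, map_sum, Finset.mul_sum]
  rw [h3, mul_add, mul_one, smul_eq_mul, ← mul_assoc, mul_inv_cancel₀ hdet, one_mul]

section
variable {F : Type*} [Field F] {n : ℕ} (M : Matrix (Fin n) (Fin n) F) (vc wc : Fin n → F)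

lemma coeff_hi {k : ℕ} (hk : n < k) : M.charpoly.coeff k = 0 := by
  apply Polynomial.coeff_eq_zero_of_natDegree_lt
  rwa [Matrix.charpoly_natDegree_eq_dim, Fintype.card_fin]

lemma coeff_top : M.charpoly.coeff n = 1 := by
  have h := Matrix.charpoly_monic M
  have hdeg : M.charpoly.natDegree = n := by
    rw [Matrix.charpoly_natDegree_eq_dim, Fintype.card_fin]
  have h2 := h.coeff_natDegree
  rwa [hdeg] at h2

lemma charpoly_ne_zero : M.charpoly ≠ 0 := (Matrix.charpoly_monic M).ne_zero

noncomputable def rvec (i : ℕ) : Fin n → F :=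
  ∑ j ∈ range (n + 1), M.charpoly.coeff (i + 1 + j) • ((M ^ j) *ᵥ vc)

noncomputable def Uvec : Fin n → F[X] :=
  fun jj => ∑ i ∈ range n, Polynomial.C (rvec M vc i jj) * X ^ i

lemma rvec_succ (k : ℕ) :
    rvec M vc k = M.charpoly.coeff (k + 1) • vc + M *ᵥ (rvec M vc (k + 1)) := by
  have hm : M *ᵥ (rvec M vc (k + 1)) =
      ∑ j ∈ range (n + 1), M.charpoly.coeff (k + 2 + j) • ((M ^ (j + 1)) *ᵥ vc) := by
    unfold rvec
    rw [mulVec_sum' _ _ _]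
    refine Finset.sum_congr rfl fun j _ => ?_
    rw [Matrix.mulVec_smul, Matrix.mulVec_mulVec, ← pow_succ']
  rw [hm]
  unfold rvec
  rw [Finset.sum_range_succ', Finset.sum_range_succ]
  have h0 : M.charpoly.coeff (k + 1 + 0) • ((M ^ 0) *ᵥ vc) = M.charpoly.coeff (k + 1) • vc := by
    simp [Matrix.one_mulVec]
  have htop : M.charpoly.coeff (k + 2 + n) • ((M ^ (n + 1)) *ᵥ vc) = 0 := by
    rw [coeff_hi M (by omega), zero_smul]
  rw [h0, htop, add_zero, add_comm]
  congr 1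
  refine Finset.sum_congr rfl fun j _ => ?_
  congr 2
  omega

lemma rvec_n : rvec M vc n = 0 := by
  unfold rvec
  refine Finset.sum_eq_zero fun j _ => ?_
  rw [coeff_hi M (by omega), zero_smul]

lemma mulVec_rvec_zero : M *ᵥ (rvec M vc 0) = -(M.charpoly.coeff 0 • vc) := by
  have hCH : Polynomial.aeval M M.charpoly = 0 := Matrix.aeval_self_charpoly M
  have hsum : ∑ i ∈ range (n + 1), M.charpoly.coeff i • M ^ i = 0 := by
    have := Polynomial.aeval_eq_sum_range (R := F) (p := M.charpoly) M
    rw [Matrix.charpoly_natDegree_eq_dim, Fintype.card_fin] at this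
    rw [← this, hCH]
  have hm : M *ᵥ (rvec M vc 0) =
      ∑ j ∈ range (n + 1), M.charpoly.coeff (1 + j) • ((M ^ (j + 1)) *ᵥ vc) := by
    unfold rvec
    rw [mulVec_sum' _ _ _]
    refine Finset.sum_congr rfl fun j _ => ?_
    rw [Matrix.mulVec_smul, Matrix.mulVec_mulVec, ← pow_succ']
  rw [hm]
  have : ∑ j ∈ range (n + 1), M.charpoly.coeff (1 + j) • ((M ^ (j + 1)) *ᵥ vc)
      = ∑ j ∈ range (n + 2), M.charpoly.coeff j • ((M ^ j) *ᵥ vc)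
        - M.charpoly.coeff 0 • ((M ^ 0) *ᵥ vc) := by
    rw [Finset.sum_range_succ' (f := fun j => M.charpoly.coeff j • ((M ^ j) *ᵥ vc))]
    simp only [add_sub_cancel_right]
    refine Finset.sum_congr rfl fun j _ => ?_
    congr 2
    omega
  rw [this, Finset.sum_range_succ, coeff_hi M (by omega), zero_smul, add_zero]
  have h2 : ∑ j ∈ range (n + 1), M.charpoly.coeff j • ((M ^ j) *ᵥ vc)
      = (∑ i ∈ range (n + 1), M.charpoly.coeff i • M ^ i) *ᵥ vc := by
    rw [sum_mulVec' _ _ _]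
    exact Finset.sum_congr rfl fun j _ => (Matrix.smul_mulVec _ _ _).symm
  rw [h2, hsum, Matrix.zero_mulVec, zero_sub]
  simp [Matrix.one_mulVec]

lemma charmatrix_mulVec_U :
    charmatrix M *ᵥ Uvec M vc = fun jj => M.charpoly * Polynomial.C (vc jj) := by
  funext jj
  have h1 : (charmatrix M *ᵥ Uvec M vc) jj
      = X * Uvec M vc jj - ∑ kk, Polynomial.C (M jj kk) * Uvec M vc kk := by
    simp only [Matrix.mulVec, dotProduct, charmatrix_apply, Matrix.sub_apply,
      Matrix.diagonal_apply, sub_mul, ite_mul, zero_mul, Finset.sum_sub_distrib,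
      Finset.sum_ite_eq, Finset.mem_univ, if_true]
  rw [h1]
  have h2 : ∀ i : ℕ, (∑ kk, Polynomial.C (M jj kk) * (Polynomial.C (rvec M vc i kk) * X ^ i))
      = Polynomial.C ((M *ᵥ rvec M vc i) jj) * X ^ i := by
    intro i
    rw [Matrix.mulVec, dotProduct, map_sum, Finset.sum_mul]
    refine Finset.sum_congr rfl fun kk _ => ?_
    rw [Polynomial.C_mul, mul_assoc]
  have h3 : ∑ kk, Polynomial.C (M jj kk) * Uvec M vc kk
      = ∑ i ∈ range n, Polynomial.C ((M *ᵥ rvec M vc i) jj) * X ^ i := by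
    simp only [Uvec, Finset.mul_sum]
    rw [Finset.sum_comm]
    exact Finset.sum_congr rfl fun i _ => h2 i
  have h4 : X * Uvec M vc jj = ∑ i ∈ range n, Polynomial.C (rvec M vc i jj) * X ^ (i + 1) := by
    unfold Uvec
    rw [Finset.mul_sum]
    exact Finset.sum_congr rfl fun i _ => by ring
  rw [h3, h4]
  have hp : M.charpoly * Polynomial.C (vc jj)
      = ∑ k ∈ range (n + 1), Polynomial.C (M.charpoly.coeff k * vc jj) * X ^ k := by
    conv_lhs => rw [M.charpoly.as_sum_range_C_mul_X_pow]
    rw [Matrix.charpoly_natDegree_eq_dim, Fintype.card_fin, Finset.sum_mul]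
    exact Finset.sum_congr rfl fun k _ => by rw [Polynomial.C_mul]; ring
  rw [hp]
  rcases Nat.eq_zero_or_pos n with hn | hn
  · subst hn
    exact jj.elim0
  obtain ⟨m, rfl⟩ : ∃ m, n = m + 1 := ⟨n - 1, by omega⟩
  rw [Finset.sum_range_succ (fun i => Polynomial.C (rvec M vc i jj) * X ^ (i + 1)),
      Finset.sum_range_succ' (fun i => Polynomial.C ((M *ᵥ rvec M vc i) jj) * X ^ i),
      Finset.sum_range_succ (fun k => Polynomial.C (M.charpoly.coeff k * vc jj) * X ^ k),
      Finset.sum_range_succ' (fun k => Polynomial.C (M.charpoly.coeff k * vc jj) * X ^ k)]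
  have hrm : rvec M vc m jj = vc jj := by
    have := rvec_succ M vc m
    rw [rvec_n, Matrix.mulVec_zero, add_zero] at this
    rw [this, coeff_top]
    simp
  have hM0 : (M *ᵥ rvec M vc 0) jj = -(M.charpoly.coeff 0 * vc jj) := by
    rw [mulVec_rvec_zero]; simp
  have hMi : ∀ i, (M *ᵥ rvec M vc (i + 1)) jj
      = rvec M vc i jj - M.charpoly.coeff (i + 1) * vc jj := by
    intro i
    have h := rvec_succ M vc i
    have h' : rvec M vc i jj
        = M.charpoly.coeff (i + 1) * vc jj + (M *ᵥ rvec M vc (i + 1)) jj := by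
      rw [h]; simp
    rw [h']; ring
  have hA : ∑ i ∈ range m, Polynomial.C (rvec M vc i jj) * X ^ (i + 1)
      - ∑ i ∈ range m, Polynomial.C ((M *ᵥ rvec M vc (i + 1)) jj) * X ^ (i + 1)
      = ∑ k ∈ range m, Polynomial.C (M.charpoly.coeff (k + 1) * vc jj) * X ^ (k + 1) := by
    rw [← Finset.sum_sub_distrib]
    exact Finset.sum_congr rfl fun i _ => by rw [hMi i, map_sub]; ring
  rw [hrm, hM0, coeff_top, ← hA, map_neg]
  simp only [one_mul]
  ring

lemma adj_charmatrix_mulVec :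
    (charmatrix M).adjugate *ᵥ (fun j => Polynomial.C (vc j)) = Uvec M vc := by
  set vC : Fin n → F[X] := fun j => Polynomial.C (vc j) with hvC
  have h2 : charmatrix M *ᵥ ((charmatrix M).adjugate *ᵥ vC)
      = fun jj => M.charpoly * Polynomial.C (vc jj) := by
    rw [Matrix.mulVec_mulVec, Matrix.mul_adjugate]
    funext jj
    show (((charmatrix M).det • (1 : Matrix (Fin n) (Fin n) F[X])) *ᵥ vC) jj = _
    rw [Matrix.smul_mulVec, Matrix.one_mulVec]
    rfl
  have h0 : charmatrix M *ᵥ (Uvec M vc - (charmatrix M).adjugate *ᵥ vC) = 0 := by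
    rw [Matrix.mulVec_sub, charmatrix_mulVec_U, h2, sub_self]
  have h3 : M.charpoly • (Uvec M vc - (charmatrix M).adjugate *ᵥ vC) = 0 := by
    have := congrArg (fun x => (charmatrix M).adjugate *ᵥ x) h0
    simpa [Matrix.mulVec_mulVec, Matrix.adjugate_mul, Matrix.smul_mulVec,
      Matrix.one_mulVec, Matrix.mulVec_zero, Matrix.charpoly] using this
  have h4 : Uvec M vc - (charmatrix M).adjugate *ᵥ vC = 0 := by
    funext j
    have := congrFun h3 j
    simp only [Pi.smul_apply, Pi.zero_apply, Pi.sub_apply, smul_eq_mul] at this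
    rcases mul_eq_zero.mp this with h | h
    · exact absurd h (charpoly_ne_zero M)
    · exact h
  exact (sub_eq_zero.mp h4).symm

noncomputable def spow (k : ℕ) : F := wc ⬝ᵥ ((M ^ k) *ᵥ vc)

noncomputable def qpoly : F[X] :=
  (fun i => Polynomial.C (wc i)) ⬝ᵥ ((charmatrix M).adjugate *ᵥ (fun j => Polynomial.C (vc j)))

lemma qpoly_formula : qpoly M vc wc
      = ∑ i ∈ range n, Polynomial.C (∑ j ∈ range (n + 1),
          M.charpoly.coeff (i + 1 + j) * spow M vc wc j) * X ^ i := by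
  unfold qpoly
  rw [adj_charmatrix_mulVec]
  have h1 : (fun i => Polynomial.C (wc i)) ⬝ᵥ Uvec M vc
      = ∑ i ∈ range n, Polynomial.C (wc ⬝ᵥ rvec M vc i) * X ^ i := by
    simp only [dotProduct, Uvec, Finset.mul_sum]
    rw [Finset.sum_comm]
    refine Finset.sum_congr rfl fun i _ => ?_
    rw [map_sum, Finset.sum_mul]
    refine Finset.sum_congr rfl fun kk _ => ?_
    rw [Polynomial.C_mul, mul_assoc]
  rw [h1]
  refine Finset.sum_congr rfl fun i _ => ?_
  congr 1
  congr 1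
  unfold rvec spow
  have hdsum : ∀ {ι : Type} (s : Finset ι) (f : ι → Fin n → F),
      wc ⬝ᵥ (∑ j ∈ s, f j) = ∑ j ∈ s, wc ⬝ᵥ f j := by
    intro ι s f
    simp only [dotProduct, Finset.sum_apply, Finset.mul_sum]
    exact Finset.sum_comm
  rw [hdsum]
  refine Finset.sum_congr rfl fun j _ => ?_
  rw [dotProduct_smul, smul_eq_mul]

lemma qpoly_coeff {t : ℕ} (ht : t < n) :
    (qpoly M vc wc).coeff t
      = ∑ j ∈ range (n + 1), M.charpoly.coeff (t + 1 + j) * spow M vc wc j := by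
  rw [qpoly_formula, Polynomial.finset_sum_coeff]
  rw [Finset.sum_eq_single t]
  · rw [Polynomial.coeff_C_mul, Polynomial.coeff_X_pow, if_pos rfl, mul_one]
  · intro i _ hne
    rw [Polynomial.coeff_C_mul, Polynomial.coeff_X_pow, if_neg (Ne.symm hne), mul_zero]
  · intro habs
    exact absurd (Finset.mem_range.mpr ht) habs

lemma qpoly_zero_of_spow (h : ∀ k, spow M vc wc k = 0) : qpoly M vc wc = 0 := by
  rw [qpoly_formula]
  refine Finset.sum_eq_zero fun i _ => ?_
  have : (∑ j ∈ range (n + 1), M.charpoly.coeff (i + 1 + j) * spow M vc wc j) = 0 :=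
    Finset.sum_eq_zero fun j _ => by rw [h j, mul_zero]
  rw [this, map_zero, zero_mul]

lemma spow_zero_of_qpoly (h : qpoly M vc wc = 0) : ∀ m, m < n → spow M vc wc m = 0 := by
  intro m
  induction m using Nat.strong_induction_on with
  | _ m ih =>
    intro hm
    have hc : (qpoly M vc wc).coeff (n - 1 - m) = 0 := by rw [h]; simp
    rw [qpoly_coeff M vc wc (by omega)] at hc
    rw [Finset.sum_eq_single m] at hc
    · have : n - 1 - m + 1 + m = n := by omega
      rw [this, coeff_top, one_mul] at hc
      exact hc
    · intro j hj hne
      rcases Nat.lt_or_ge j m with hlt | hge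
      · rw [ih j hlt (by omega), mul_zero]
      · have : n < n - 1 - m + 1 + j := by omega
        rw [coeff_hi M this, zero_mul]
    · intro habs
      exact absurd (Finset.mem_range.mpr (by omega)) habs

lemma charpoly_perturb (lam : F) :
    (M + lam • Matrix.of (fun i j => vc i * wc j)).charpoly
      = M.charpoly - Polynomial.C lam * qpoly M vc wc := by
  have hcm : charmatrix (M + lam • Matrix.of (fun i j => vc i * wc j))
      = charmatrix M + Matrix.replicateCol (Fin 1) (fun j => (-Polynomial.C lam) * Polynomial.C (vc j))
          * Matrix.replicateRow (Fin 1) (fun i => Polynomial.C (wc i)) := by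
    apply Matrix.ext; intro i j
    simp only [charmatrix_apply, Matrix.add_apply, Matrix.smul_apply, Matrix.of_apply,
      Matrix.mul_apply, Matrix.replicateCol_apply, Matrix.replicateRow_apply, smul_eq_mul,
      Finset.univ_unique, Finset.sum_singleton, Polynomial.C_add, Polynomial.C_mul]
    ring
  show (charmatrix _).det = _
  rw [hcm, det_rank_one_update (charpoly_ne_zero M)]
  have hu : (fun j => (-Polynomial.C lam) * Polynomial.C (vc j))
      = (-Polynomial.C lam) • (fun j => Polynomial.C (vc j)) := by
    funext j; simp [smul_eq_mul]
  rw [hu, Matrix.mulVec_smul, dotProduct_smul]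
  show M.charpoly + _ = _
  rw [smul_eq_mul]
  unfold qpoly
  ring

lemma spow_all_zero (h : ∀ m, m < n → spow M vc wc m = 0) : ∀ k, spow M vc wc k = 0 := by
  rcases Nat.eq_zero_or_pos n with hn | hn
  · subst hn
    intro k
    simp [spow, dotProduct]
  intro k
  induction k using Nat.strong_induction_on with
  | _ k ih =>
    by_cases hk : k < n
    · exact h k hk
    push_neg at hk
    have hsum : ∑ i ∈ range (n + 1), M.charpoly.coeff i • M ^ i = 0 := by
      have h1 := Polynomial.aeval_eq_sum_range (R := F) (p := M.charpoly) M
      rw [Matrix.charpoly_natDegree_eq_dim, Fintype.card_fin] at h1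
      rw [← h1, Matrix.aeval_self_charpoly]
    have hMn : M ^ n = -(∑ i ∈ range n, M.charpoly.coeff i • M ^ i) := by
      rw [Finset.sum_range_succ, coeff_top, one_smul] at hsum
      exact eq_neg_of_add_eq_zero_right hsum
    have hMk : M ^ k = -(∑ i ∈ range n, M.charpoly.coeff i • M ^ (k - n + i)) := by
      have hk' : k = (k - n) + n := by omega
      calc M ^ k = M ^ (k - n) * M ^ n := by rw [← pow_add, ← hk']
      _ = -(∑ i ∈ range n, M.charpoly.coeff i • (M ^ (k - n) * M ^ i)) := by
          rw [hMn, mul_neg, Finset.mul_sum]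
          congr 1
          exact Finset.sum_congr rfl fun i _ => (mul_smul_comm _ _ _)
      _ = _ := by
          congr 1
          exact Finset.sum_congr rfl fun i _ => by rw [← pow_add]
    have hdsum : ∀ {ι : Type} (s : Finset ι) (f : ι → Fin n → F),
        wc ⬝ᵥ (∑ j ∈ s, f j) = ∑ j ∈ s, wc ⬝ᵥ f j := by
      intro ι s f
      simp only [dotProduct, Finset.sum_apply, Finset.mul_sum]
      exact Finset.sum_comm
    have hmsum : (∑ i ∈ range n, M.charpoly.coeff i • M ^ (k - n + i)) *ᵥ vc
        = ∑ i ∈ range n, M.charpoly.coeff i • ((M ^ (k - n + i)) *ᵥ vc) := by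
      rw [sum_mulVec' _ _ vc]
      exact Finset.sum_congr rfl fun i _ => Matrix.smul_mulVec _ _ _
    unfold spow
    rw [hMk, Matrix.neg_mulVec, dotProduct_neg, hmsum, hdsum]
    rw [Finset.sum_eq_zero, neg_zero]
    intro i hi
    rw [dotProduct_smul, smul_eq_mul]
    have hlt : k - n + i < k := by
      have := Finset.mem_range.mp hi
      omega
    rw [show wc ⬝ᵥ (M ^ (k - n + i) *ᵥ vc) = spow M vc wc (k - n + i) from rfl, ih _ hlt,
      mul_zero]

end

end Stmt2Aux

open Stmt2Aux in
theorem stmt2 {F V : Type*} [Field F] [AddCommGroup V] [Module F V]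
    [FiniteDimensional F V]
    (A : Module.End F V) (v : V) (φ : Module.Dual F V) :
    List.TFAE [
      (∀ k : ℕ, φ ((A ^ k) v) = 0),
      (∀ lam : F, (A + lam • φ.smulRight v).charpoly = A.charpoly),
      (∃ lam : F, lam ≠ 0 ∧ (A + lam • φ.smulRight v).charpoly = A.charpoly)] := by
  classical
  let nn := Module.finrank F V
  let b : Module.Basis (Fin nn) F V := Module.finBasis F V
  let M : Matrix (Fin nn) (Fin nn) F := LinearMap.toMatrix b b A
  let vc : Fin nn → F := fun i => b.repr v i
  let wc : Fin nn → F := fun i => φ (b i)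
  have hphi : ∀ x : V, φ x = wc ⬝ᵥ (fun i => b.repr x i) := by
    intro x
    conv_lhs => rw [← b.sum_repr x]
    rw [map_sum, dotProduct]
    exact Finset.sum_congr rfl fun i _ => by rw [_root_.map_smul, smul_eq_mul, mul_comm]
  have hG3 : ∀ k : ℕ, φ ((A ^ k) v) = spow M vc wc k := by
    intro k
    rw [hphi]
    show wc ⬝ᵥ (fun i => b.repr ((A ^ k) v) i) = wc ⬝ᵥ ((M ^ k) *ᵥ vc)
    congr 1
    have h1 : M ^ k = LinearMap.toMatrix b b (A ^ k) :=
      (LinearMap.toMatrix_pow b A k)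
    rw [h1]
    exact funext fun i => (congrFun (LinearMap.toMatrix_mulVec_repr b b (A ^ k) v) i).symm
  have hG1 : ∀ lam : F, LinearMap.toMatrix b b (A + lam • φ.smulRight v)
      = M + lam • Matrix.of (fun i j => vc i * wc j) := by
    intro lam
    rw [map_add, _root_.map_smul]
    congr 1
    congr 1
    apply Matrix.ext; intro i j
    rw [LinearMap.toMatrix_apply]
    show b.repr ((φ.smulRight v) (b j)) i = vc i * wc j
    rw [LinearMap.smulRight_apply, _root_.map_smul]
    show φ (b j) * b.repr v i = vc i * wc j
    exact mul_comm _ _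
  have hG2 : ∀ lam : F, (A + lam • φ.smulRight v).charpoly
      = (M + lam • Matrix.of (fun i j => vc i * wc j)).charpoly := by
    intro lam
    rw [← LinearMap.charpoly_toMatrix (A + lam • φ.smulRight v) b, hG1]
  have hG2' : A.charpoly = M.charpoly := (LinearMap.charpoly_toMatrix A b).symm
  tfae_have 1 → 2 := by
    intro h1 lam
    rw [hG2 lam, hG2', charpoly_perturb,
      qpoly_zero_of_spow M vc wc (fun k => by rw [← hG3 k]; exact h1 k), mul_zero, sub_zero]
  tfae_have 2 → 3 := fun h2 => ⟨1, one_ne_zero, h2 1⟩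
  tfae_have 3 → 1 := by
    rintro ⟨lam, hlam, heq⟩ k
    rw [hG2 lam, hG2', charpoly_perturb] at heq
    have h0 : Polynomial.C lam * qpoly M vc wc = 0 := sub_eq_self.mp heq
    have hq : qpoly M vc wc = 0 := by
      rcases mul_eq_zero.mp h0 with h | h
      · exact absurd h (Polynomial.C_ne_zero.mpr hlam)
      · exact h
    rw [hG3 k]
    exact spow_all_zero M vc wc (spow_zero_of_qpoly M vc wc hq) k
  tfae_finish
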